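/- Let V and W be finite-dimensional vector spaces over a field F with bases α and β respectively. If Γ(V_α) and Γ(W_β) are isomorphic as graphs, then V and W are isomorphic as vector spaces. -/

import Mathlib

/-- The non-zero component graph of a vector space `V` with respect to a basis `b`:
vertices are the non-zero vectors, and two distinct vectors are adjacent iff they have a
common basis vector with non-zero coefficient in their basis representations. -/
def NZCG {F V : Type*} [Field F] [AddCommGroup V] [Module F V] {n : ℕ}
    (b : Module.Basis (Fin n) F V) : SimpleGraph {v : V // v ≠ 0} where
  Adj x y := x ≠ y ∧ ∃ i, b.repr x.1 i ≠ 0 ∧ b.repr y.1 i ≠ 0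
  symm := by
    constructor
    rintro x y ⟨hxy, i, h1, h2⟩
    exact ⟨hxy.symm, i, h2, h1⟩
  loopless := by
    constructor
    rintro x ⟨h, _⟩
    exact h rfl

lemma nzcg_dim_le {F V W : Type*} [Field F] [AddCommGroup V]
    [Module F V] [AddCommGroup W] [Module F W] {n k : ℕ}
    (bα : Module.Basis (Fin n) F V) (bβ : Module.Basis (Fin k) F W)
    (e : NZCG bα ≃g NZCG bβ) : n ≤ k := by
  -- images of basis vectors
  set g : Fin n → {w : W // w ≠ 0} := fun i => e ⟨bα i, bα.ne_zero i⟩ with hg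
  have key : ∀ i : Fin n, ∃ m, bβ.repr (g i).1 m ≠ 0 := by
    intro i
    by_contra h'
    push_neg at h'
    have hz : bβ.repr (g i).1 = 0 := Finsupp.ext fun m => h' m
    have : (g i).1 = 0 := by
      have := bβ.repr.map_eq_zero_iff.mp hz
      exact this
    exact (g i).2 this
  choose φ hφ using key
  have inj : Function.Injective φ := by
    intro i j hij
    by_contra hne
    have hvne : (⟨bα i, bα.ne_zero i⟩ : {v : V // v ≠ 0}) ≠ ⟨bα j, bα.ne_zero j⟩ := by
      simp only [ne_eq, Subtype.mk.injEq]
      exact bα.injective.ne hne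
    have hadj : (NZCG bβ).Adj (g i) (g j) := by
      refine ⟨?_, φ i, hφ i, ?_⟩
      · exact fun hc => hvne (e.injective hc)
      · rw [hij]; exact hφ j
    have : (NZCG bα).Adj ⟨bα i, bα.ne_zero i⟩ ⟨bα j, bα.ne_zero j⟩ := e.map_rel_iff.mp hadj
    obtain ⟨-, m, h1, h2⟩ := this
    simp only [Module.Basis.repr_self, Finsupp.single_apply, ne_eq, ite_eq_right_iff,
      one_ne_zero, imp_false, not_not] at h1 h2
    exact hne (h1.trans h2.symm)
  simpa using Fintype.card_le_of_injective φ inj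

theorem nzcg_graph_iso_implies_linear_equiv {F V W : Type*} [Field F] [AddCommGroup V]
    [Module F V] [AddCommGroup W] [Module F W] {n k : ℕ}
    (bα : Module.Basis (Fin n) F V) (bβ : Module.Basis (Fin k) F W)
    (h : Nonempty (NZCG bα ≃g NZCG bβ)) : Nonempty (V ≃ₗ[F] W) := by
  obtain ⟨e⟩ := h
  have h1 : n ≤ k := nzcg_dim_le bα bβ e
  have h2 : k ≤ n := nzcg_dim_le bβ bα e.symm
  exact ⟨bα.equiv bβ (finCongr (le_antisymm h1 h2))⟩
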